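/- Let K be a field and let A, B ∈ SL(3,K) be lower unitriangular matrices A = (1,0,0; a₂₁,1,0; a₃₁,a₃₂,1) and B = (1,0,0; b₂₁,1,0; b₃₁,b₃₂,1) with a₂₁a₃₂b₂₁b₃₂ ≠ 0. Then A and B are conjugate in SL(3,K) if and only if (a₂₁²a₃₂)/(b₂₁²b₃₂) is a cube in K. -/

import Mathlib

/-- Two lower unitriangular matrices `A = (1,0,0; a₂₁,1,0; a₃₁,a₃₂,1)` and
`B = (1,0,0; b₂₁,1,0; b₃₁,b₃₂,1)` with `a₂₁ a₃₂ b₂₁ b₃₂ ≠ 0` are conjugate in `SL(3,K)`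
if and only if `(a₂₁² a₃₂)/(b₂₁² b₃₂)` is a cube in `K`. -/
theorem unitriangular_conj_iff_cube {K : Type*} [Field K]
    (a21 a31 a32 b21 b31 b32 : K) (h : a21 * a32 * b21 * b32 ≠ 0) :
    (∃ P : Matrix (Fin 3) (Fin 3) K, P.det = 1 ∧
        P * !![(1 : K), 0, 0; a21, 1, 0; a31, a32, 1] * P⁻¹ =
          !![(1 : K), 0, 0; b21, 1, 0; b31, b32, 1]) ↔
      ∃ c : K, c ^ 3 = (a21 ^ 2 * a32) / (b21 ^ 2 * b32) := by
  have ha : a21 ≠ 0 := fun h0 => h (by rw [h0]; ring)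
  have hb : a32 ≠ 0 := fun h0 => h (by rw [h0]; ring)
  have hc : b21 ≠ 0 := fun h0 => h (by rw [h0]; ring)
  have hd : b32 ≠ 0 := fun h0 => h (by rw [h0]; ring)
  set A : Matrix (Fin 3) (Fin 3) K := !![(1 : K), 0, 0; a21, 1, 0; a31, a32, 1] with hA
  set B : Matrix (Fin 3) (Fin 3) K := !![(1 : K), 0, 0; b21, 1, 0; b31, b32, 1] with hB
  set P1 : Matrix (Fin 3) (Fin 3) K :=
    !![1, 0, 0; 0, b21/a21, 0;
       0, (b31*a21*a32 - b21*b32*a31)/(a21^2*a32), b21*b32/(a21*a32)] with hP1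
  have hP1det : P1.det = b21^2*b32/(a21^2*a32) := by
    rw [hP1, Matrix.det_fin_three]
    simp [Matrix.vecHead, Matrix.vecTail]
    field_simp
  have hP1A : P1 * A = B * P1 := by
    ext i j
    fin_cases i <;> fin_cases j <;>
      simp [hP1, hA, hB, Matrix.mul_apply, Fin.sum_univ_three, Matrix.vecHead,
        Matrix.vecTail] <;>
      (try field_simp) <;> (try ring)
  have hP1u : IsUnit P1.det := by
    rw [hP1det]
    exact isUnit_iff_ne_zero.2 (div_ne_zero (mul_ne_zero (pow_ne_zero 2 hc) hd)
      (mul_ne_zero (pow_ne_zero 2 ha) hb))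
  constructor
  · rintro ⟨P, hPdet, hconj⟩
    have hPu : IsUnit P.det := by rw [hPdet]; exact isUnit_one
    have hPA : P * A = B * P := by
      have := congrArg (· * P) hconj
      simpa [Matrix.mul_assoc, Matrix.nonsing_inv_mul P hPu] using this
    set Q : Matrix (Fin 3) (Fin 3) K := P1⁻¹ * P with hQ
    have hAinv : P1⁻¹ * B = A * P1⁻¹ := by
      have h1 : P1⁻¹ * B = P1⁻¹ * B * P1 * P1⁻¹ :=
        (Matrix.mul_nonsing_inv_cancel_right P1 (P1⁻¹ * B) hP1u).symm
      rw [h1, Matrix.mul_assoc P1⁻¹ B P1, ← hP1A, ← Matrix.mul_assoc,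
        Matrix.nonsing_inv_mul P1 hP1u, Matrix.one_mul]
    have hQA : Q * A = A * Q := by
      calc Q * A = P1⁻¹ * (P * A) := by rw [hQ, Matrix.mul_assoc]
        _ = P1⁻¹ * B * P := by rw [hPA, Matrix.mul_assoc]
        _ = A * P1⁻¹ * P := by rw [hAinv]
        _ = A * Q := by rw [hQ, Matrix.mul_assoc]
    have key : ∀ i j, (Q * A) i j = (A * Q) i j := fun i j => by rw [hQA]
    have e01 := key 0 1
    have e00 := key 0 0
    have e11 := key 1 1
    have e10 := key 1 0
    have e21 := key 2 1
    simp only [hA, Matrix.mul_apply, Fin.sum_univ_three] at e01 e00 e11 e10 e21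
    norm_num [Matrix.vecHead, Matrix.vecTail, Matrix.cons_val_two, Matrix.cons_val_one, Matrix.cons_val_zero, Matrix.tail_cons, Matrix.head_cons] at e01 e00 e11 e10 e21
    have q02 : Q 0 2 = 0 := e01.resolve_right hb
    have q01 : Q 0 1 = 0 := by
      have h2 : Q 0 1 * a21 = 0 := by linear_combination e00 - a31 * q02
      exact (mul_eq_zero.1 h2).resolve_right ha
    have q12 : Q 1 2 = 0 := by
      have h2 : Q 1 2 * a32 = 0 := by linear_combination e11 + a21 * q01
      exact (mul_eq_zero.1 h2).resolve_right hb
    have q11 : Q 1 1 = Q 0 0 := by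
      have h2 : (Q 1 1 - Q 0 0) * a21 = 0 := by linear_combination e10 - a31 * q12
      have h3 := (mul_eq_zero.1 h2).resolve_right ha
      linear_combination h3
    have q22 : Q 2 2 = Q 0 0 := by
      have h2 : (Q 2 2 - Q 0 0) * a32 = 0 := by
        linear_combination e21 + a31 * q01 + a32 * q11
      have h3 := (mul_eq_zero.1 h2).resolve_right hb
      linear_combination h3
    have hQdet3 : Q.det = (Q 0 0) ^ 3 := by
      rw [Matrix.det_fin_three, q01, q02, q12, q11, q22]; ring
    have hQdet : Q.det = a21^2*a32/(b21^2*b32) := by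
      rw [hQ, Matrix.det_mul, Matrix.det_nonsing_inv, hPdet, hP1det, mul_one,
        Ring.inverse_eq_inv, inv_div]
    exact ⟨Q 0 0, by rw [← hQdet3, hQdet]⟩
  · rintro ⟨c, hc3⟩
    have hXne : a21^2*a32/(b21^2*b32) ≠ 0 :=
      div_ne_zero (mul_ne_zero (pow_ne_zero 2 ha) hb) (mul_ne_zero (pow_ne_zero 2 hc) hd)
    have hcne : c ≠ 0 := fun h0 => hXne (by rw [← hc3, h0]; ring)
    refine ⟨c • P1, ?_, ?_⟩
    · rw [Matrix.det_smul, hP1det, Fintype.card_fin, hc3]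
      field_simp
    · have hPA : (c • P1) * A = B * (c • P1) := by
        rw [Matrix.smul_mul, Matrix.mul_smul, hP1A]
      have hu : IsUnit ((c • P1)).det := by
        rw [Matrix.det_smul, Fintype.card_fin]
        exact isUnit_iff_ne_zero.2 (mul_ne_zero (pow_ne_zero _ hcne) hP1u.ne_zero)
      rw [hPA]
      exact Matrix.mul_nonsing_inv_cancel_right (c • P1) B hu
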